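/- arXiv:2007.14476 — 3 statements merged into one kernel-verified Lean document; each statement's English description precedes it below -/
import Mathlib

section
/- Let Γ be a real symmetric positive definite n×n matrix (the prior covariance), let F be a real m×n matrix (the forward operator), and let d₁,…,d_m ≥ 0 (the diagonal entries of the observation precision matrix, assumed diagonal, i.e., uncorrelated observation errors). For ζ ∈ ℝᵐ with ζᵢ ≥ 0 for all i, define H(ζ) = Γ⁻¹ + Fᵀ D(ζ) F, where D(ζ) is the diagonal m×m matrix with entries dᵢ ζᵢ. Then H(ζ) is symmetric positive definite for every such ζ, and the A-optimality criterion Ψ(ζ) = Tr(H(ζ)⁻¹) is a convex function on the nonnegative orthant {ζ ∈ ℝᵐ : ζᵢ ≥ 0 for all i}. -/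
open Matrix

lemma aux_mulVec_inv {n : ℕ} (H : Matrix (Fin n) (Fin n) ℝ) (hH : H.PosDef) (x : Fin n → ℝ) :
    H *ᵥ (H⁻¹ *ᵥ x) = x := by
  rw [mulVec_mulVec, mul_nonsing_inv _ (isUnit_iff_ne_zero.mpr hH.det_pos.ne'), one_mulVec]

lemma aux_key {n : ℕ} (H : Matrix (Fin n) (Fin n) ℝ) (hH : H.PosDef) (hs : Hᵀ = H)
    (x y : Fin n → ℝ) : 2 * (x ⬝ᵥ y) - y ⬝ᵥ H *ᵥ y ≤ x ⬝ᵥ H⁻¹ *ᵥ x := by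
  have h0 : 0 ≤ (y - H⁻¹ *ᵥ x) ⬝ᵥ H *ᵥ (y - H⁻¹ *ᵥ x) := by
    simpa using hH.posSemidef.dotProduct_mulVec_nonneg (y - H⁻¹ *ᵥ x)
  have h1 : H *ᵥ (H⁻¹ *ᵥ x) = x := aux_mulVec_inv H hH x
  have h2 : (H⁻¹ *ᵥ x) ⬝ᵥ (H *ᵥ y) = x ⬝ᵥ y := by
    rw [dotProduct_mulVec, ← mulVec_transpose, hs, h1]
  have h3 : (H⁻¹ *ᵥ x) ⬝ᵥ (H *ᵥ (H⁻¹ *ᵥ x)) = x ⬝ᵥ H⁻¹ *ᵥ x := by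
    rw [h1, dotProduct_comm]
  have h4 : y ⬝ᵥ (H *ᵥ (H⁻¹ *ᵥ x)) = x ⬝ᵥ y := by rw [h1, dotProduct_comm]
  rw [mulVec_sub, sub_dotProduct, dotProduct_sub, dotProduct_sub, h2, h3, h4] at h0
  linarith

lemma aux_eq {n : ℕ} (H : Matrix (Fin n) (Fin n) ℝ) (hH : H.PosDef) (x : Fin n → ℝ) :
    x ⬝ᵥ H⁻¹ *ᵥ x = 2 * (x ⬝ᵥ (H⁻¹ *ᵥ x)) - (H⁻¹ *ᵥ x) ⬝ᵥ H *ᵥ (H⁻¹ *ᵥ x) := by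
  rw [aux_mulVec_inv H hH x, dotProduct_comm (H⁻¹ *ᵥ x) x]; ring

lemma aux_trace {n : ℕ} (M : Matrix (Fin n) (Fin n) ℝ) :
    M.trace = ∑ j, Pi.single j 1 ⬝ᵥ M *ᵥ Pi.single j 1 := by
  simp [trace, diag, mulVec_single, single_dotProduct]

section
variable (n m : ℕ) (Γ : Matrix (Fin n) (Fin n) ℝ) (F : Matrix (Fin m) (Fin n) ℝ) (d : Fin m → ℝ)

noncomputable def HmatAux (ζ : Fin m → ℝ) : Matrix (Fin n) (Fin n) ℝ :=
  Γ⁻¹ + Fᵀ * Matrix.diagonal (fun i => d i * ζ i) * F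

lemma HmatAux_posDef (hΓ : Γ.PosDef) (hd : ∀ i, 0 ≤ d i) (ζ : Fin m → ℝ) (hζ : ∀ i, 0 ≤ ζ i) :
    (HmatAux n m Γ F d ζ).PosDef := by
  refine hΓ.inv.add_posSemidef ?_
  have hdiag : (Matrix.diagonal (fun i => d i * ζ i)).PosSemidef :=
    Matrix.PosSemidef.diagonal (fun i => mul_nonneg (hd i) (hζ i))
  simpa using hdiag.conjTranspose_mul_mul_same F

lemma HmatAux_symm (hΓ : Γ.PosDef) (ζ : Fin m → ℝ) :
    (HmatAux n m Γ F d ζ)ᵀ = HmatAux n m Γ F d ζ := by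
  have h1 : (Γ⁻¹)ᵀ = Γ⁻¹ := by
    have := hΓ.isHermitian.inv
    simpa [Matrix.IsHermitian] using this
  simp [HmatAux, transpose_add, transpose_mul, Matrix.mul_assoc, h1]

lemma HmatAux_affine (a b : ℝ) (hab : a + b = 1) (ζ₀ ζ₁ : Fin m → ℝ) :
    HmatAux n m Γ F d (a • ζ₀ + b • ζ₁) = a • HmatAux n m Γ F d ζ₀ + b • HmatAux n m Γ F d ζ₁ := by
  have hΓinv : Γ⁻¹ = a • Γ⁻¹ + b • Γ⁻¹ := by rw [← add_smul, hab, one_smul]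
  have hdiag : (Matrix.diagonal (fun i => d i * (a • ζ₀ + b • ζ₁) i)) =
      a • Matrix.diagonal (fun i => d i * ζ₀ i) + b • Matrix.diagonal (fun i => d i * ζ₁ i) := by
    ext i j
    rcases eq_or_ne i j with rfl | h
    · simp [Matrix.diagonal_apply_eq, smul_eq_mul]; ring
    · simp [Matrix.diagonal_apply_ne _ h]
  rw [HmatAux, hdiag]
  rw [Matrix.mul_add, Matrix.add_mul, Matrix.mul_smul, Matrix.mul_smul, Matrix.smul_mul,
    Matrix.smul_mul]
  nth_rewrite 1 [hΓinv]
  simp only [HmatAux, smul_add]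
  abel
end

/-- With a symmetric positive definite prior covariance `Γ`, forward operator
`F`, and nonnegative observation precisions `d`, the weighted posterior
precision `H(ζ) = Γ⁻¹ + Fᵀ D(ζ) F` (with `D(ζ) = diagonal (dᵢ ζᵢ)`) is
symmetric positive definite for every `ζ` in the nonnegative orthant, and the
A-optimality criterion `ζ ↦ Tr(H(ζ)⁻¹)` is convex on the nonnegative
orthant. -/
theorem stmt_7 (n m : ℕ) (Γ : Matrix (Fin n) (Fin n) ℝ) (hΓ : Γ.PosDef)
    (F : Matrix (Fin m) (Fin n) ℝ) (d : Fin m → ℝ) (hd : ∀ i, 0 ≤ d i) :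
    (∀ ζ : Fin m → ℝ, (∀ i, 0 ≤ ζ i) →
        (Γ⁻¹ + Fᵀ * Matrix.diagonal (fun i => d i * ζ i) * F).PosDef) ∧
      ConvexOn ℝ {ζ : Fin m → ℝ | ∀ i, 0 ≤ ζ i}
        (fun ζ => (Γ⁻¹ + Fᵀ * Matrix.diagonal (fun i => d i * ζ i) * F)⁻¹.trace) := by
  have hpd : ∀ ζ : Fin m → ℝ, (∀ i, 0 ≤ ζ i) → (HmatAux n m Γ F d ζ).PosDef :=
    HmatAux_posDef n m Γ F d hΓ hd
  have hsym := HmatAux_symm n m Γ F d hΓ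
  constructor
  · exact fun ζ hζ => hpd ζ hζ
  constructor
  · have hset : {ζ : Fin m → ℝ | ∀ i, 0 ≤ ζ i} =
        Set.pi Set.univ (fun _ : Fin m => Set.Ici (0:ℝ)) := by
      ext ζ; simp [Set.mem_pi, Set.mem_Ici, Pi.le_def]
    rw [hset]
    exact convex_pi (fun i _ => convex_Ici 0)
  intro ζ₀ hζ₀ ζ₁ hζ₁ a b ha hb hab
  simp only [Set.mem_setOf_eq] at hζ₀ hζ₁
  set ζ : Fin m → ℝ := a • ζ₀ + b • ζ₁ with hζdef
  have hζ : ∀ i, 0 ≤ ζ i := fun i =>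
    add_nonneg (mul_nonneg ha (hζ₀ i)) (mul_nonneg hb (hζ₁ i))
  have H := hpd ζ hζ
  have H0 := hpd ζ₀ hζ₀
  have H1 := hpd ζ₁ hζ₁
  show (HmatAux n m Γ F d ζ)⁻¹.trace ≤
      a • (HmatAux n m Γ F d ζ₀)⁻¹.trace + b • (HmatAux n m Γ F d ζ₁)⁻¹.trace
  rw [aux_trace, aux_trace, aux_trace, smul_eq_mul, smul_eq_mul, Finset.mul_sum, Finset.mul_sum,
    ← Finset.sum_add_distrib]
  apply Finset.sum_le_sum
  intro j _
  set x : Fin n → ℝ := Pi.single j 1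
  set y : Fin n → ℝ := (HmatAux n m Γ F d ζ)⁻¹ *ᵥ x with hy
  have hquad : y ⬝ᵥ (HmatAux n m Γ F d ζ) *ᵥ y =
      a * (y ⬝ᵥ (HmatAux n m Γ F d ζ₀) *ᵥ y) + b * (y ⬝ᵥ (HmatAux n m Γ F d ζ₁) *ᵥ y) := by
    rw [hζdef, HmatAux_affine n m Γ F d a b hab, add_mulVec, smul_mulVec,
      smul_mulVec, dotProduct_add, dotProduct_smul, dotProduct_smul]
    simp [smul_eq_mul]
  calc x ⬝ᵥ (HmatAux n m Γ F d ζ)⁻¹ *ᵥ x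
      = 2 * (x ⬝ᵥ y) - y ⬝ᵥ (HmatAux n m Γ F d ζ) *ᵥ y := aux_eq _ H x
    _ = a * (2 * (x ⬝ᵥ y) - y ⬝ᵥ (HmatAux n m Γ F d ζ₀) *ᵥ y)
        + b * (2 * (x ⬝ᵥ y) - y ⬝ᵥ (HmatAux n m Γ F d ζ₁) *ᵥ y) := by
        rw [hquad]; linear_combination (-(2 * (x ⬝ᵥ y))) * hab
    _ ≤ a * (x ⬝ᵥ (HmatAux n m Γ F d ζ₀)⁻¹ *ᵥ x) + b * (x ⬝ᵥ (HmatAux n m Γ F d ζ₁)⁻¹ *ᵥ x) := by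
        have k0 := aux_key _ H0 (hsym ζ₀) x y
        have k1 := aux_key _ H1 (hsym ζ₁) x y
        exact add_le_add (mul_le_mul_of_nonneg_left k0 ha) (mul_le_mul_of_nonneg_left k1 hb)
end

section
/- Let H be a real symmetric positive definite n×n matrix, E a real symmetric n×n matrix, and P a real q×n matrix such that P H⁻¹ Pᵀ is invertible. Then the function t ↦ log det(P (H + t E)⁻¹ Pᵀ) is differentiable at t = 0 with derivative equal to −Tr((P H⁻¹ Pᵀ)⁻¹ P H⁻¹ E H⁻¹ Pᵀ). -/
open Matrix

attribute [local instance] Matrix.linftyOpNormedRing Matrix.linftyOpNormedAlgebra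

lemma det_norm_bound (m : ℕ) (v : Fin m → Fin m → ℝ) :
    ‖(Matrix.of v).det‖ ≤ (m.factorial : ℝ) * ∏ i, ‖v i‖ := by
  rw [Matrix.det_apply]
  refine (norm_sum_le _ _).trans ?_
  have key : ∀ σ : Equiv.Perm (Fin m),
      ‖Equiv.Perm.sign σ • ∏ i, Matrix.of v (σ i) i‖ ≤ ∏ i, ‖v i‖ := by
    intro σ
    have h2 : ‖Equiv.Perm.sign σ • ∏ i, Matrix.of v (σ i) i‖
        = |∏ i, v (σ i) i| := by
      rcases Int.units_eq_one_or (Equiv.Perm.sign σ) with h | h <;>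
        · rw [h]; simp [Units.smul_def, Real.norm_eq_abs, ← Finset.abs_prod]
    rw [h2, Finset.abs_prod]
    calc (∏ i, |v (σ i) i|) ≤ ∏ i, ‖v (σ i)‖ := by
          refine Finset.prod_le_prod (fun i _ => abs_nonneg _) (fun i _ => ?_)
          exact norm_le_pi_norm (v (σ i)) i
      _ = ∏ i, ‖v i‖ := Equiv.prod_comp σ (fun i => ‖v i‖)
  refine (Finset.sum_le_sum fun σ _ => key σ).trans ?_
  rw [Finset.sum_const, Finset.card_univ, Fintype.card_perm, Fintype.card_fin,
    nsmul_eq_mul]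

noncomputable def detCMM (m : ℕ) :
    ContinuousMultilinearMap ℝ (fun _ : Fin m => (Fin m → ℝ)) ℝ :=
  MultilinearMap.mkContinuous
    (Matrix.detRowAlternating (n := Fin m) (R := ℝ)).toMultilinearMap
    (m.factorial : ℝ) (fun v => det_norm_bound m v)

lemma detCMM_apply (m : ℕ) (v : Fin m → Fin m → ℝ) :
    detCMM m v = (Matrix.of v).det := rfl

lemma detCMM_linearDeriv (m : ℕ) (A Y : Fin m → Fin m → ℝ) :
    (detCMM m).linearDeriv A Y
      = ((Matrix.of A).adjugate * Matrix.of Y).trace := by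
  rw [ContinuousMultilinearMap.linearDeriv_apply]
  have h1 : ∀ i, detCMM m (Function.update A i (Y i))
      = ((Matrix.of A).updateRow i (Y i)).det := fun i => rfl
  simp only [h1]
  have h2 : ∀ i, ((Matrix.of A).updateRow i (Y i)).det
      = ((Matrix.of A)ᵀ.adjugate *ᵥ (Y i)) i := by
    intro i
    rw [← Matrix.cramer_transpose_apply, Matrix.cramer_eq_adjugate_mulVec]
  simp only [h2, Matrix.trace, Matrix.diag, Matrix.mul_apply, Matrix.mulVec,
    dotProduct, ← Matrix.adjugate_transpose, Matrix.transpose_apply]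
  exact Finset.sum_comm

lemma hasDerivAt_det {m : ℕ} {f : ℝ → (Fin m → Fin m → ℝ)}
    {f' : Fin m → Fin m → ℝ} {t : ℝ} (hf : HasDerivAt f f' t) :
    HasDerivAt (fun s => (Matrix.of (f s)).det)
      ((Matrix.of (f t)).adjugate * Matrix.of f').trace t := by
  have h := ((detCMM m).hasFDerivAt (x := f t)).comp_hasDerivAt t hf
  rw [detCMM_linearDeriv] at h
  have he : (⇑(detCMM m) ∘ f) = fun s => (Matrix.of (f s)).det := by
    funext s; exact detCMM_apply m (f s)
  rwa [he] at h

/-- For a symmetric positive definite `H`, a symmetric `E`, and a `q × n` matrix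
`P` with `P H⁻¹ Pᵀ` invertible, the function `t ↦ log det(P (H + t E)⁻¹ Pᵀ)` is
differentiable at `t = 0` with derivative `−Tr((P H⁻¹ Pᵀ)⁻¹ P H⁻¹ E H⁻¹ Pᵀ)`. -/
theorem stmt_12 (n q : ℕ) (H E : Matrix (Fin n) (Fin n) ℝ)
    (hH : H.PosDef) (hE : E.IsSymm) (P : Matrix (Fin q) (Fin n) ℝ)
    (hP : IsUnit (P * H⁻¹ * Pᵀ)) :
    HasDerivAt (fun t : ℝ => Real.log (P * (H + t • E)⁻¹ * Pᵀ).det)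
      (-((P * H⁻¹ * Pᵀ)⁻¹ * P * H⁻¹ * E * H⁻¹ * Pᵀ).trace) 0 := by
  have hHdet : IsUnit H.det := isUnit_iff_ne_zero.2 hH.det_pos.ne'
  have hHu : IsUnit H := (Matrix.isUnit_iff_isUnit_det H).2 hHdet
  set u : (Matrix (Fin n) (Fin n) ℝ)ˣ := hHu.unit with hu
  have huc : (u : Matrix (Fin n) (Fin n) ℝ) = H := hHu.unit_spec
  have huinv : ((u⁻¹ : (Matrix (Fin n) (Fin n) ℝ)ˣ) : Matrix (Fin n) (Fin n) ℝ) = H⁻¹ := by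
    rw [Matrix.nonsing_inv_eq_ringInverse, ← huc, Ring.inverse_unit]
  have h1 : HasDerivAt (fun t : ℝ => H + t • E) E 0 := by
    have hh := ((hasDerivAt_id (0:ℝ)).smul_const E).const_add H
    simp only [id_eq, one_smul] at hh
    exact hh
  have h2 : HasDerivAt (fun t : ℝ => (H + t • E)⁻¹) (-(H⁻¹ * E * H⁻¹)) 0 := by
    have hg : HasFDerivAt (Ring.inverse (M₀ := Matrix (Fin n) (Fin n) ℝ))
        (-(ContinuousLinearMap.mulLeftRight ℝ _ ↑u⁻¹ ↑u⁻¹)) ((fun t : ℝ => H + t • E) 0) := by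
      show HasFDerivAt _ _ (H + (0:ℝ) • E)
      rw [show H + (0:ℝ) • E = (u : Matrix (Fin n) (Fin n) ℝ) by simp [huc]]
      exact hasFDerivAt_ringInverse u
    have hr := hg.comp_hasDerivAt 0 h1
    have heq : (Ring.inverse ∘ fun t : ℝ => H + t • E)
        = fun t : ℝ => (H + t • E)⁻¹ := by
      funext t; simp only [Function.comp_apply]; rw [Matrix.nonsing_inv_eq_ringInverse]
    rw [heq] at hr
    simp [huinv] at hr
    exact hr
  let L : Matrix (Fin n) (Fin n) ℝ →ₗ[ℝ] (Fin q → Fin q → ℝ) :=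
    { toFun := fun X => (P * X * Pᵀ : Matrix (Fin q) (Fin q) ℝ)
      map_add' := fun X Y => by simp [Matrix.mul_add, Matrix.add_mul]; rfl
      map_smul' := fun c X => by simp [Matrix.mul_smul, Matrix.smul_mul]; rfl }
  have h3 : HasDerivAt (fun t : ℝ => L ((H + t • E)⁻¹)) (L (-(H⁻¹ * E * H⁻¹))) 0 :=
    by have := (L.toContinuousLinearMap.hasFDerivAt (x := (H + (0:ℝ) • E)⁻¹)).comp_hasDerivAt 0 h2; exact this
  have h4 := hasDerivAt_det h3
  set A₀ : Matrix (Fin q) (Fin q) ℝ := P * H⁻¹ * Pᵀ with hA₀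
  have hA₀det : IsUnit A₀.det := A₀.isUnit_iff_isUnit_det.1 hP
  have hA₀ne : A₀.det ≠ 0 := hA₀det.ne_zero
  have hf0 : Matrix.of (L ((H + (0:ℝ) • E)⁻¹)) = A₀ := by
    show P * (H + (0:ℝ) • E)⁻¹ * Pᵀ = A₀
    simp [hA₀]
  have hf' : Matrix.of (L (-(H⁻¹ * E * H⁻¹))) = -(P * H⁻¹ * E * H⁻¹ * Pᵀ) := by
    show P * -(H⁻¹ * E * H⁻¹) * Pᵀ = -(P * H⁻¹ * E * H⁻¹ * Pᵀ)
    simp only [Matrix.mul_neg, Matrix.neg_mul]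
    simp only [Matrix.mul_assoc]
  rw [hf0, hf'] at h4
  have h4' : HasDerivAt (fun t : ℝ => (P * (H + t • E)⁻¹ * Pᵀ).det)
      (A₀.adjugate * -(P * H⁻¹ * E * H⁻¹ * Pᵀ)).trace 0 := h4
  have hfne : (P * (H + (0:ℝ) • E)⁻¹ * Pᵀ).det ≠ 0 := by
    simpa [hA₀] using hA₀ne
  have h5 := h4'.log hfne
  convert h5 using 1
  · have hadj : A₀.adjugate = A₀.det • A₀⁻¹ := by
      calc A₀.adjugate = (A₀⁻¹ * A₀) * A₀.adjugate := by
            rw [Matrix.nonsing_inv_mul _ hA₀det, Matrix.one_mul]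
        _ = A₀⁻¹ * (A₀ * A₀.adjugate) := by rw [Matrix.mul_assoc]
        _ = A₀.det • A₀⁻¹ := by rw [Matrix.mul_adjugate, Matrix.mul_smul, Matrix.mul_one]
    have hassoc : A₀⁻¹ * P * H⁻¹ * E * H⁻¹ * Pᵀ = A₀⁻¹ * (P * H⁻¹ * E * H⁻¹ * Pᵀ) := by
      simp only [Matrix.mul_assoc]
    have hdet0 : (P * (H + (0:ℝ) • E)⁻¹ * Pᵀ).det = A₀.det := by simp [hA₀]
    rw [hadj, hA₀, hassoc, hdet0]
    simp only [Matrix.mul_neg, Matrix.smul_mul, Matrix.trace_neg, Matrix.trace_smul,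
      smul_eq_mul]
    rw [← hA₀]
    field_simp
end

section
/- Let Γ be a real symmetric positive definite n×n matrix, F a real m×n matrix, P a real q×n matrix, and let r₁,…,r_m > 0. For ζ ∈ ℝᵐ with ζᵢ ≥ 0 for all i, define H(ζ) = Γ⁻¹ + Fᵀ diag(ζ₁/r₁, …, ζ_m/r_m) F and Ψ(ζ) = Tr(P H(ζ)⁻¹ Pᵀ). Then for each j ∈ {1,…,m}, the partial derivative of Ψ with respect to ζⱼ at any ζ in the nonnegative orthant exists and equals −∑_{i=1}^{q} (s_i ⊙ s_i)ⱼ, where s_i = R^{−1/2} F H(ζ)⁻¹ Pᵀ e_i ∈ ℝᵐ, R^{−1/2} = diag(1/√r₁, …, 1/√r_m), e_i is the i-th standard basis vector of ℝ^{q}, and ⊙ denotes the entrywise product of vectors. -/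
open Matrix

attribute [local instance] Matrix.linftyOpNormedRing Matrix.linftyOpNormedAlgebra

/-- Gradient of the goal-oriented A-optimality criterion in the traditional OED
formulation with a diagonal observation error covariance `R = diag(r)` and
design weights `ζ`: with `H(ζ) = Γ⁻¹ + Fᵀ diag(ζᵢ/rᵢ) F` and
`Ψ(ζ) = Tr(P H(ζ)⁻¹ Pᵀ)`, the partial derivative `∂Ψ/∂ζⱼ` at any `ζ` in the
nonnegative orthant exists and equals `−∑ᵢ (sᵢ ⊙ sᵢ)ⱼ`, where
`sᵢ = R^{-1/2} F H(ζ)⁻¹ Pᵀ eᵢ`. -/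
theorem stmt_13 (n m q : ℕ) (Γ : Matrix (Fin n) (Fin n) ℝ) (hΓ : Γ.PosDef)
    (F : Matrix (Fin m) (Fin n) ℝ) (P : Matrix (Fin q) (Fin n) ℝ)
    (r : Fin m → ℝ) (hr : ∀ i, 0 < r i)
    (ζ : Fin m → ℝ) (hζ : ∀ i, 0 ≤ ζ i) (j : Fin m) :
    let H : (Fin m → ℝ) → Matrix (Fin n) (Fin n) ℝ := fun ξ =>
      Γ⁻¹ + Fᵀ * Matrix.diagonal (fun i => ξ i / r i) * F
    let Ψ : (Fin m → ℝ) → ℝ := fun ξ => (P * (H ξ)⁻¹ * Pᵀ).trace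
    let Rinvhalf : Matrix (Fin m) (Fin m) ℝ :=
      Matrix.diagonal fun i => 1 / Real.sqrt (r i)
    let s : Fin q → (Fin m → ℝ) := fun i =>
      (Rinvhalf * F * (H ζ)⁻¹ * Pᵀ).mulVec (Pi.single i 1)
    HasDerivAt (fun u : ℝ => Ψ (Function.update ζ j u))
      (-∑ i : Fin q, (s i * s i) j) (ζ j) := by
  intro H Ψ Rinvhalf s
  have hHζdef : H ζ = Γ⁻¹ + Fᵀ * Matrix.diagonal (fun i => ζ i / r i) * F := rfl
  have hHζ : (H ζ).PosDef := by
    rw [hHζdef]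
    have h2 : (Fᵀ * Matrix.diagonal (fun i => ζ i / r i) * F).PosSemidef := by
      have := (Matrix.posSemidef_diagonal_iff.mpr
        (fun i => div_nonneg (hζ i) (hr i).le)).conjTranspose_mul_mul_same F
      simpa using this
    exact hΓ.inv.add_posSemidef h2
  have hHunit : IsUnit (H ζ) := by
    rw [Matrix.isUnit_iff_isUnit_det]
    exact isUnit_iff_ne_zero.mpr hHζ.det_pos.ne'
  set K : Matrix (Fin n) (Fin n) ℝ := (H ζ)⁻¹ with hK
  have hHsymm : (H ζ)ᵀ = H ζ := hHζ.isHermitian.eq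
  have hKsymm : Kᵀ = K := by rw [hK, Matrix.transpose_nonsing_inv, hHsymm]
  set D : Matrix (Fin m) (Fin m) ℝ :=
    Matrix.diagonal (fun i => if i = j then 1 / r j else 0) with hD
  set B : Matrix (Fin n) (Fin n) ℝ := Fᵀ * D * F with hB
  have hHaff : ∀ u : ℝ, H (Function.update ζ j u) = H ζ + (u - ζ j) • B := by
    intro u
    have hdiag : Matrix.diagonal (fun i => Function.update ζ j u i / r i)
        = Matrix.diagonal (fun i => ζ i / r i) + (u - ζ j) • D := by
      ext a b
      simp only [hD, Matrix.add_apply, Matrix.smul_apply, Matrix.diagonal_apply,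
        Function.update_apply, smul_eq_mul]
      by_cases hab : a = b
      · subst hab
        by_cases haj : a = j
        · simp only [haj, if_pos rfl, if_true]
          have := (hr j).ne'
          field_simp
          ring
        · simp [haj]
      · simp [hab]
    show Γ⁻¹ + Fᵀ * Matrix.diagonal (fun i => Function.update ζ j u i / r i) * F = _
    rw [hdiag, hHζdef]
    simp only [Matrix.mul_add, Matrix.add_mul, Matrix.mul_smul, Matrix.smul_mul, hB]
    abel
  have hderivH : HasDerivAt (fun u : ℝ => H (Function.update ζ j u)) B (ζ j) := by
    have heq : (fun u : ℝ => H (Function.update ζ j u))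
        = fun u => H ζ + (u - ζ j) • B := funext hHaff
    rw [heq]
    have h1 : HasDerivAt (fun u : ℝ => u - ζ j) 1 (ζ j) :=
      (hasDerivAt_id (ζ j)).sub_const (ζ j)
    convert (h1.smul_const B).const_add (H ζ) using 1
    · rfl
    · rfl
    · rfl
    · simp
  obtain ⟨u0, hu0⟩ := hHunit
  have hu0inv : (↑u0⁻¹ : Matrix (Fin n) (Fin n) ℝ) = K := by
    rw [hK, Matrix.nonsing_inv_eq_ringInverse, ← hu0, Ring.inverse_unit]
  have hderivInv : HasDerivAt (fun u : ℝ => (H (Function.update ζ j u))⁻¹)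
      (-(K * B * K)) (ζ j) := by
    have hF := hasFDerivAt_ringInverse (𝕜 := ℝ) u0
    have hcomp := hF.comp_hasDerivAt_of_eq (ζ j) hderivH
      (by rw [Function.update_eq_self, hu0])
    have : (fun u : ℝ => Ring.inverse (H (Function.update ζ j u)))
        = fun u : ℝ => (H (Function.update ζ j u))⁻¹ :=
      funext fun u => (Matrix.nonsing_inv_eq_ringInverse _).symm
    rw [Function.comp_def, this] at hcomp
    convert hcomp using 1
    · rfl
    · rfl
    · rfl
    simp [ContinuousLinearMap.mulLeftRight_apply, hu0inv]
  let Φ : Matrix (Fin n) (Fin n) ℝ →ₗ[ℝ] ℝ :=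
    { toFun := fun X => (P * X * Pᵀ).trace
      map_add' := fun X Y => by
        simp [Matrix.mul_add, Matrix.add_mul, Matrix.trace_add]
      map_smul' := fun c X => by
        simp [Matrix.mul_smul, Matrix.smul_mul, Matrix.trace_smul] }
  have hderivΨ : HasDerivAt (fun u : ℝ => Ψ (Function.update ζ j u))
      (Φ (-(K * B * K))) (ζ j) :=
    (Φ.toContinuousLinearMap.hasFDerivAt.comp_hasDerivAt (ζ j) hderivInv)
  convert hderivΨ using 1
  have hPKF : P * K * Fᵀ = (F * K * Pᵀ)ᵀ := by
    simp [Matrix.transpose_mul, hKsymm, Matrix.mul_assoc]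
  set G : Matrix (Fin m) (Fin q) ℝ := F * K * Pᵀ with hG
  have htr : Φ (-(K * B * K)) = -((Gᵀ * D * G).trace) := by
    show (P * (-(K * B * K)) * Pᵀ).trace = _
    have : P * (-(K * B * K)) * Pᵀ = -((P * K * Fᵀ) * D * (F * (K * Pᵀ))) := by
      simp only [hB]
      simp only [Matrix.mul_neg, Matrix.neg_mul, Matrix.mul_assoc]
    rw [this, hPKF, Matrix.trace_neg, hG]
    congr 1
    simp only [Matrix.mul_assoc]
  rw [htr, neg_inj]
  have hsij : ∀ i : Fin q, (s i) j = (1 / Real.sqrt (r j)) * G j i := by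
    intro i
    show ((Rinvhalf * F * K * Pᵀ).mulVec (Pi.single i 1)) j = _
    have h5 : Rinvhalf * F * K * Pᵀ = Rinvhalf * G := by
      simp only [hG, Matrix.mul_assoc]
    rw [h5, Matrix.mulVec_single]
    show (Rinvhalf * G) j i * 1 = _
    simp [Rinvhalf, Matrix.diagonal_mul]
  have htrG : (Gᵀ * D * G).trace = ∑ i : Fin q, (1 / r j) * (G j i * G j i) := by
    rw [Matrix.trace]
    refine Finset.sum_congr rfl fun i _ => ?_
    show (Gᵀ * D * G) i i = _
    rw [Matrix.mul_assoc, Matrix.mul_apply]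
    simp only [hD, Matrix.diagonal_mul, Matrix.transpose_apply, ite_mul, zero_mul, mul_ite,
      mul_zero]
    rw [Finset.sum_ite_eq' Finset.univ j]
    simp [mul_comm, mul_assoc]
    ring
  rw [htrG]
  refine Finset.sum_congr rfl fun i _ => ?_
  have h6 : (s i * s i) j = s i j * s i j := rfl
  rw [h6, hsij i]
  have hsq : (1 / Real.sqrt (r j)) * (1 / Real.sqrt (r j)) = 1 / r j := by
    rw [div_mul_div_comm, one_mul, Real.mul_self_sqrt (hr j).le]
  rw [show (1 / Real.sqrt (r j) * G j i) * (1 / Real.sqrt (r j) * G j i)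
      = ((1 / Real.sqrt (r j)) * (1 / Real.sqrt (r j))) * (G j i * G j i) by ring, hsq]
end
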